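/- arXiv:math/0207100 — 6 statements merged into one kernel-verified Lean document; each statement's English description precedes it below -/
import Mathlib

section
/- For any simple graph G and any vertex v of G, m(G) ≤ m(G − v) + m(G − N[v]), where G − v is G with v deleted and G − N[v] is G with the closed neighborhood of v deleted. -/
/-- `I` is an independent set of the simple graph `G`. -/
def IsIndepSet {V : Type*} (G : SimpleGraph V) (I : Set V) : Prop :=
  ∀ ⦃u⦄, u ∈ I → ∀ ⦃w⦄, w ∈ I → ¬ G.Adj u w

/-- `I` is a maximal independent set of the simple graph `G`. -/
def IsMaxIndepSet {V : Type*} (G : SimpleGraph V) (I : Set V) : Prop :=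
  IsIndepSet G I ∧ ∀ J, IsIndepSet G J → I ⊆ J → J = I

/-- `numMIS G` is the number of maximal independent sets of `G`. -/
noncomputable def numMIS {V : Type*} (G : SimpleGraph V) : ℕ :=
  {I : Set V | IsMaxIndepSet G I}.ncard

/-- The closed neighborhood of `v` in `G`. -/
def closedNbhd {V : Type*} (G : SimpleGraph V) (v : V) : Set V :=
  insert v (G.neighborSet v)

theorem numMIS_le_del_add_delClosedNbhd {V : Type*} [Fintype V]
    (G : SimpleGraph V) (v : V) :
    numMIS G ≤ numMIS (G.induce {u | u ≠ v}) +
      numMIS (G.induce ((closedNbhd G v)ᶜ)) := by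
  classical
  set A := {I : Set V | IsMaxIndepSet G I ∧ v ∉ I} with hA
  set B := {I : Set V | IsMaxIndepSet G I ∧ v ∈ I} with hB
  have hsplit : {I : Set V | IsMaxIndepSet G I} = A ∪ B := by
    ext I; by_cases h : v ∈ I <;> simp [hA, hB, h]
  have hdisj : Disjoint A B := by
    rw [Set.disjoint_left]; rintro I ⟨_, h⟩ ⟨_, h'⟩; exact h h'
  have h1 : numMIS G = A.ncard + B.ncard := by
    rw [numMIS, hsplit, Set.ncard_union_eq hdisj A.toFinite B.toFinite]
  -- Part A : maximal independent sets avoiding v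
  have hAle : A.ncard ≤ numMIS (G.induce {u | u ≠ v}) := by
    set f : Set V → Set {u | u ≠ v} := fun I => Subtype.val ⁻¹' I with hf
    have hrec : ∀ I ∈ A, Subtype.val '' (f I) = I := by
      rintro I ⟨_, hv⟩
      rw [hf, Set.image_preimage_eq_inter_range, Subtype.range_coe_subtype]
      ext u
      simp only [Set.mem_inter_iff, Set.mem_setOf_eq]
      exact ⟨fun h => h.1, fun h => ⟨h, fun he => hv (he ▸ h)⟩⟩
    have hinj : Set.InjOn f A := by
      intro I hI J hJ h
      rw [← hrec I hI, ← hrec J hJ, h]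
    have himg : f '' A ⊆ {I | IsMaxIndepSet (G.induce {u | u ≠ v}) I} := by
      rintro _ ⟨I, hI, rfl⟩
      obtain ⟨⟨hind, hmax⟩, hv⟩ := hI
      constructor
      · intro a ha b hb hadj
        exact hind ha hb hadj
      · intro J hJ hsub
        have hJind : IsIndepSet G (Subtype.val '' J) := by
          rintro _ ⟨a, ha, rfl⟩ _ ⟨b, hb, rfl⟩ hadj
          exact hJ ha hb hadj
        have hIJ : I ⊆ Subtype.val '' J := by
          intro u hu
          exact ⟨⟨u, fun he => hv (he ▸ hu)⟩, hsub hu, rfl⟩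
        have hJI : Subtype.val '' J = I := hmax _ hJind hIJ
        apply Set.Subset.antisymm _ hsub
        intro x hx
        have hxI : (x : V) ∈ I := hJI ▸ ⟨x, hx, rfl⟩
        exact hxI
    calc A.ncard = (f '' A).ncard := (Set.ncard_image_of_injOn hinj).symm
      _ ≤ _ := Set.ncard_le_ncard himg (Set.toFinite _)
  -- Part B : maximal independent sets containing v
  have hBle : B.ncard ≤ numMIS (G.induce ((closedNbhd G v)ᶜ)) := by
    set s : Set V := (closedNbhd G v)ᶜ with hs
    set g : Set V → Set s := fun I => Subtype.val ⁻¹' I with hg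
    have hmem : ∀ I ∈ B, ∀ u ∈ I, u ≠ v → u ∈ s := by
      rintro I ⟨⟨hind, _⟩, hv⟩ u hu hne
      intro hc
      rcases hc with h | h
      · exact hne h
      · exact hind hv hu h
    have hrec : ∀ I ∈ B, insert v (Subtype.val '' (g I)) = I := by
      rintro I hI
      obtain ⟨⟨hind, _⟩, hv⟩ := hI
      rw [hg, Set.image_preimage_eq_inter_range, Subtype.range_coe_subtype]
      ext u
      simp only [Set.mem_insert_iff, Set.mem_inter_iff, Set.mem_setOf_eq]
      constructor
      · rintro (rfl | ⟨h, _⟩) <;> [exact hv; exact h]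
      · intro hu
        by_cases hne : u = v
        · exact Or.inl hne
        · exact Or.inr ⟨hu, hmem I ⟨⟨hind, ‹_›⟩, hv⟩ u hu hne⟩
    have hinj : Set.InjOn g B := by
      intro I hI J hJ h
      rw [← hrec I hI, ← hrec J hJ, h]
    have himg : g '' B ⊆ {I | IsMaxIndepSet (G.induce s) I} := by
      rintro _ ⟨I, hI, rfl⟩
      obtain ⟨⟨hind, hmax⟩, hv⟩ := hI
      constructor
      · intro a ha b hb hadj
        exact hind ha hb hadj
      · intro J hJ hsub
        have hKind : IsIndepSet G (insert v (Subtype.val '' J)) := by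
          rintro u hu w hw hadj
          rcases hu with rfl | ⟨a, ha, rfl⟩ <;> rcases hw with rfl | ⟨b, hb, rfl⟩
          · exact G.loopless.irrefl _ hadj
          · exact b.2 (Or.inr hadj)
          · exact a.2 (Or.inr hadj.symm)
          · exact hJ ha hb hadj
        have hIK : I ⊆ insert v (Subtype.val '' J) := by
          intro u hu
          by_cases hne : u = v
          · exact Or.inl hne
          · exact Or.inr ⟨⟨u, hmem I ⟨⟨hind, hmax⟩, hv⟩ u hu hne⟩, hsub hu, rfl⟩
        have hKI : insert v (Subtype.val '' J) = I := hmax _ hKind hIK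
        apply Set.Subset.antisymm _ hsub
        intro x hx
        have hxI : (x : V) ∈ I := hKI ▸ Or.inr ⟨x, hx, rfl⟩
        exact hxI
    calc B.ncard = (g '' B).ncard := (Set.ncard_image_of_injOn hinj).symm
      _ ≤ _ := Set.ncard_le_ncard himg (Set.toFinite _)
  omega
end

section
/- If G is a simple graph containing a complete subgraph B that has at least one vertex adjacent in G only to other vertices of B, then m(G) = Σ_{v ∈ V(B)} m(G − N[v]). -/
section Aux

variable {V : Type*} {G : SimpleGraph V}

lemma mem_closedNbhd {v u : V} : u ∈ closedNbhd G v ↔ u = v ∨ G.Adj v u := by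
  simp [closedNbhd]

lemma mem_compl_closedNbhd {v u : V} :
    u ∈ (closedNbhd G v)ᶜ ↔ u ≠ v ∧ ¬ G.Adj v u := by
  simp [closedNbhd, not_or]

/-- Every maximal independent set contains a unique vertex of the clique `B`. -/
lemma exists_unique_clique_vertex {B : Finset V} (hB : G.IsClique (B : Set V))
    (hw : ∃ w ∈ B, ∀ u, G.Adj w u → u ∈ B) {I : Set V} (hI : IsMaxIndepSet G I) :
    ∃! v, v ∈ B ∧ v ∈ I := by
  obtain ⟨w, hwB, hwadj⟩ := hw
  have hex : ∃ x ∈ I, x ∈ closedNbhd G w := by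
    by_contra h
    push_neg at h
    have hind : IsIndepSet G (insert w I) := by
      intro u hu x hx hadj
      rcases hu with rfl | hu
      · rcases hx with rfl | hx
        · exact G.loopless.irrefl _ hadj
        · exact h x hx (mem_closedNbhd.mpr (Or.inr hadj))
      · rcases hx with rfl | hx
        · exact h u hu (mem_closedNbhd.mpr (Or.inr hadj.symm))
        · exact hI.1 hu hx hadj
    have heq := hI.2 _ hind (Set.subset_insert _ _)
    have hwI : w ∈ I := heq ▸ Set.mem_insert w I
    exact h w hwI (mem_closedNbhd.mpr (Or.inl rfl))
  obtain ⟨x, hxI, hxn⟩ := hex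
  have hxB : x ∈ B := by
    rcases mem_closedNbhd.mp hxn with rfl | hadj
    · exact hwB
    · exact hwadj x hadj
  refine ⟨x, ⟨hxB, hxI⟩, ?_⟩
  rintro y ⟨hyB, hyI⟩
  by_contra hne
  exact hI.1 hyI hxI (hB (by simpa using hyB) (by simpa using hxB) hne)

/-- Decomposition of an independent set containing `v`. -/
lemma indep_decomp {v : V} {I : Set V} (hind : IsIndepSet G I) (hv : v ∈ I) :
    I = insert v (I ∩ (closedNbhd G v)ᶜ) := by
  ext x
  constructor
  · intro hx
    by_cases hxv : x = v
    · exact hxv ▸ Set.mem_insert _ _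
    · exact Set.mem_insert_of_mem _ ⟨hx, mem_compl_closedNbhd.mpr ⟨hxv, hind hv hx⟩⟩
  · rintro (rfl | hx)
    · exact hv
    · exact hx.1

lemma insert_indep {v : V} (J : Set ((closedNbhd G v)ᶜ : Set V))
    (hJ : IsIndepSet (G.induce ((closedNbhd G v)ᶜ)) J) :
    IsIndepSet G (insert v (Subtype.val '' J)) := by
  intro u hu x hx hadj
  rcases hu with rfl | hu
  · rcases hx with rfl | hx
    · exact G.loopless.irrefl _ hadj
    · obtain ⟨a, _, rfl⟩ := hx
      exact (mem_compl_closedNbhd.mp a.2).2 hadj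
  · rcases hx with rfl | hx
    · obtain ⟨a, _, rfl⟩ := hu
      exact (mem_compl_closedNbhd.mp a.2).2 hadj.symm
    · obtain ⟨a, ha, rfl⟩ := hu
      obtain ⟨b, hb, rfl⟩ := hx
      exact hJ ha hb hadj

/-- The fiber of maximal independent sets containing `v` corresponds to the maximal
independent sets of the graph induced on the complement of the closed neighborhood. -/
lemma mis_fiber_image (v : V) :
    {J : Set ((closedNbhd G v)ᶜ : Set V) | IsMaxIndepSet (G.induce ((closedNbhd G v)ᶜ)) J} =
      (fun I : Set V => Subtype.val ⁻¹' I) '' {I | IsMaxIndepSet G I ∧ v ∈ I} := by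
  ext J
  simp only [Set.mem_setOf_eq, Set.mem_image]
  constructor
  · intro hJ
    refine ⟨insert v (Subtype.val '' J), ⟨⟨insert_indep J hJ.1, ?_⟩, Set.mem_insert _ _⟩, ?_⟩
    · intro K hK hIK
      have hvK : v ∈ K := hIK (Set.mem_insert _ _)
      have hKd := indep_decomp hK hvK
      have hK' : IsIndepSet (G.induce ((closedNbhd G v)ᶜ)) (Subtype.val ⁻¹' K) := by
        intro a ha b hb hadj
        exact hK ha hb hadj
      have hJK : J ⊆ Subtype.val ⁻¹' K := fun a ha =>
        hIK (Set.mem_insert_of_mem _ ⟨a, ha, rfl⟩)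
      have := hJ.2 _ hK' hJK
      rw [hKd]
      have : K ∩ (closedNbhd G v)ᶜ = Subtype.val '' J := by
        rw [← this, Set.image_preimage_eq_inter_range, Subtype.range_coe]
      rw [this]
    · ext u
      simp only [Set.mem_preimage, Set.mem_insert_iff]
      constructor
      · rintro (h | h)
        · exact absurd h (mem_compl_closedNbhd.mp u.2).1
        · exact Subtype.val_injective.mem_set_image.mp h
      · intro h
        exact Or.inr ⟨u, h, rfl⟩
  · rintro ⟨I, ⟨hI, hvI⟩, rfl⟩
    constructor
    · intro a ha b hb hadj
      exact hI.1 ha hb hadj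
    · intro K hK hJK
      have hI'ind : IsIndepSet G (insert v (Subtype.val '' K)) := insert_indep K hK
      have hII' : I ⊆ insert v (Subtype.val '' K) := by
        rw [indep_decomp hI.1 hvI]
        intro x hx
        rcases hx with rfl | hx
        · exact Set.mem_insert _ _
        · exact Set.mem_insert_of_mem _ ⟨⟨x, hx.2⟩, hJK hx.1, rfl⟩
      have heq := hI.2 _ hI'ind hII'
      ext a
      constructor
      · intro ha
        have : (a : V) ∈ I := heq ▸ Set.mem_insert_of_mem _ ⟨a, ha, rfl⟩
        exact this
      · exact fun ha => hJK ha

theorem numMIS_eq_sum_over_clique' {V : Type*} [Fintype V] [DecidableEq V]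
    (G : SimpleGraph V) (B : Finset V) (hB : G.IsClique (B : Set V))
    (hw : ∃ w ∈ B, ∀ u, G.Adj w u → u ∈ B) :
    numMIS G = ∑ v ∈ B, numMIS (G.induce ((closedNbhd G v)ᶜ)) := by
  classical
  obtain ⟨w, hwB, -⟩ := id hw
  have huniq := fun {I} hI => exists_unique_clique_vertex hB hw (I := I) hI
  -- the choice function picking the unique clique vertex of a MIS
  set f : Set V → V := fun I => if h : ∃ x, x ∈ B ∧ x ∈ I then h.choose else w with hf
  have hfI : ∀ {I : Set V}, IsMaxIndepSet G I → f I ∈ B ∧ f I ∈ I := by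
    intro I hI
    obtain ⟨x, hx, -⟩ := huniq hI
    have hex : ∃ x, x ∈ B ∧ x ∈ I := ⟨x, hx⟩
    rw [hf]
    simp only [dif_pos hex]
    exact hex.choose_spec
  have hffib : ∀ {I : Set V}, IsMaxIndepSet G I → ∀ {v}, v ∈ B → (f I = v ↔ v ∈ I) := by
    intro I hI v hv
    constructor
    · rintro rfl; exact (hfI hI).2
    · intro hvI
      obtain ⟨x, -, hxu⟩ := huniq hI
      rw [hxu _ (hfI hI), hxu _ ⟨hv, hvI⟩]
  have hfin : {I : Set V | IsMaxIndepSet G I}.Finite := Set.toFinite _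
  have hmaps : ∀ I ∈ hfin.toFinset, f I ∈ B := by
    intro I hI
    exact (hfI (hfin.mem_toFinset.mp hI)).1
  rw [numMIS, Set.ncard_eq_toFinset_card _ hfin,
    Finset.card_eq_sum_card_fiberwise hmaps]
  refine Finset.sum_congr rfl fun v hv => ?_
  have hfib : {I : Set V | IsMaxIndepSet G I ∧ v ∈ I}.Finite := Set.toFinite _
  have hfil : hfin.toFinset.filter (fun I => f I = v) = hfib.toFinset := by
    ext I
    simp only [Finset.mem_filter, Set.Finite.mem_toFinset, Set.mem_setOf_eq]
    constructor
    · rintro ⟨hI, hfI'⟩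
      exact ⟨hI, (hffib hI hv).mp hfI'⟩
    · rintro ⟨hI, hvI⟩
      exact ⟨hI, (hffib hI hv).mpr hvI⟩
  rw [hfil, ← Set.ncard_eq_toFinset_card _ hfib, numMIS, mis_fiber_image v,
    Set.ncard_image_of_injOn]
  intro I1 hI1 I2 hI2 hpre
  rw [Set.mem_setOf_eq] at hI1 hI2
  have h1 := indep_decomp hI1.1.1 hI1.2
  have h2 := indep_decomp hI2.1.1 hI2.2
  rw [h1, h2]
  congr 1
  have : Subtype.val '' (Subtype.val ⁻¹' I1 : Set ((closedNbhd G v)ᶜ : Set V)) =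
      Subtype.val '' (Subtype.val ⁻¹' I2 : Set ((closedNbhd G v)ᶜ : Set V)) := congrArg _ hpre
  rwa [Set.image_preimage_eq_inter_range, Set.image_preimage_eq_inter_range,
    Subtype.range_coe] at this

end Aux

theorem numMIS_eq_sum_over_clique {V : Type*} [Fintype V] [DecidableEq V]
    (G : SimpleGraph V) (B : Finset V) (hB : G.IsClique (B : Set V))
    (hw : ∃ w ∈ B, ∀ u, G.Adj w u → u ∈ B) :
    numMIS G = ∑ v ∈ B, numMIS (G.induce ((closedNbhd G v)ᶜ)) := by
  exact numMIS_eq_sum_over_clique' G B hB hw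
end

section
/- If G is a forest with n ≥ 1 vertices, then the number of maximal independent sets of G is at most 2^⌊n/2⌋. -/
open SimpleGraph

lemma exists_leaf {V : Type*} [Fintype V] {G : SimpleGraph V} (hG : G.IsAcyclic)
    {a₀ b₀ : V} (hab : G.Adj a₀ b₀) :
    ∃ v u, G.Adj v u ∧ ∀ w, G.Adj v w → w = u := by
  classical
  set S : Set ℕ := {n | ∃ (a b : V) (p : G.Walk a b), p.IsPath ∧ p.length = n} with hS
  have hne : 1 ∈ S := ⟨a₀, b₀, Walk.cons hab Walk.nil, by simp [hab.ne], by simp⟩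
  have hbdd : BddAbove S := by
    refine ⟨Fintype.card V, fun n hn => ?_⟩
    obtain ⟨a, b, p, hp, rfl⟩ := hn
    exact hp.length_lt.le
  have hmem : sSup S ∈ S := Nat.sSup_mem ⟨1, hne⟩ hbdd
  obtain ⟨a, b, p, hp, hlen⟩ := hmem
  have h1 : 1 ≤ sSup S := le_csSup hbdd hne
  have hlen1 : 1 ≤ p.length := hlen ▸ h1
  have key : ∀ w, G.Adj b w → ∃ hws : w ∈ p.support,
      p.support = (p.takeUntil w hws).support ++ [b] := by
    intro w hw
    have hws : w ∈ p.support := by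
      by_contra hws
      have hq : (p.concat hw).IsPath := by
        rw [← Walk.isPath_reverse_iff, Walk.reverse_concat]
        rw [Walk.cons_isPath_iff]
        exact ⟨hp.reverse, by simpa using hws⟩
      have : p.length + 1 ∈ S := ⟨a, w, p.concat hw, hq, by simp [Walk.length_concat]⟩
      have := le_csSup hbdd this
      omega
    refine ⟨hws, ?_⟩
    have hq : (p.dropUntil w hws).IsPath := hp.dropUntil hws
    have he : (Walk.cons hw.symm Walk.nil : G.Walk w b).IsPath := by simp [hw.ne']
    have := hG.path_unique ⟨p.dropUntil w hws, hq⟩ ⟨Walk.cons hw.symm Walk.nil, he⟩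
    have hdrop : p.dropUntil w hws = Walk.cons hw.symm Walk.nil := congrArg Subtype.val this
    conv_lhs => rw [← p.take_spec hws]
    rw [Walk.support_append, hdrop]
    simp
  -- get a neighbor of b
  have hd : p.darts ≠ [] := by
    intro h
    have := p.length_darts
    rw [h] at this
    simp at this
    omega
  set d := p.darts.getLast hd with hdd
  have hdb : d.snd = b := by rw [hdd, Walk.getLast_darts_eq_lastDart]; rfl
  have hadj : G.Adj b d.fst := by
    have := d.adj
    rw [hdb] at this
    exact this.symm
  refine ⟨b, d.fst, hadj, fun w hw => ?_⟩
  obtain ⟨hws, hsup⟩ := key w hw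
  obtain ⟨hus, hsup'⟩ := key d.fst hadj
  rw [hsup'] at hsup
  have hAA : (p.takeUntil w hws).support = (p.takeUntil d.fst hus).support :=
    List.append_cancel_right hsup.symm
  have h1' : (p.takeUntil w hws).support.getLast? = some w := by
    rw [List.getLast?_eq_getLast (Walk.support_ne_nil _), Walk.getLast_support]
  have h2' : (p.takeUntil d.fst hus).support.getLast? = some d.fst := by
    rw [List.getLast?_eq_getLast (Walk.support_ne_nil _), Walk.getLast_support]
  rw [hAA, h2'] at h1'
  exact (Option.some_injective _ h1').symm

lemma card_restrict {V : Type*} [Fintype V] (G : SimpleGraph V) (T : Set V) (z : V)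
    (hTz : ∀ x ∈ T, ¬ G.Adj z x)
    (S' : Set (Set V)) (hS' : ∀ I ∈ S', IsMaxIndepSet G I ∧ z ∈ I ∧ I ⊆ insert z T) :
    S'.ncard ≤ numMIS (G.induce T) := by
  classical
  refine Set.ncard_le_ncard_of_injOn (fun I => Subtype.val ⁻¹' I) ?_ ?_ (Set.toFinite _)
  · intro I hI
    obtain ⟨⟨hind, hmax⟩, hzI, hIT⟩ := hS' I hI
    constructor
    · intro x hx y hy hadj
      exact hind hx hy hadj
    · intro K hK hJK
      refine Set.Subset.antisymm ?_ hJK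
      intro x hxK
      have hins : _root_.IsIndepSet G (insert ↑x I) := by
        intro c hc d hd hadj
        rcases Set.mem_insert_iff.1 hc with rfl | hcI
        · rcases Set.mem_insert_iff.1 hd with rfl | hdI
          · exact G.irrefl hadj
          · rcases hIT hdI with rfl | hdT
            · exact hTz _ x.2 hadj.symm
            · exact hK hxK (show (⟨d, hdT⟩ : T) ∈ K from hJK hdI) hadj
        · rcases Set.mem_insert_iff.1 hd with rfl | hdI
          · rcases hIT hcI with rfl | hcT
            · exact hTz _ x.2 hadj
            · exact hK (show (⟨c, hcT⟩ : T) ∈ K from hJK hcI) hxK hadj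
          · exact hind hcI hdI hadj
      have heq := hmax _ hins (Set.subset_insert _ _)
      exact show (↑x : V) ∈ I from heq ▸ Set.mem_insert _ _
  · intro I hI I' hI' h
    obtain ⟨_, hzI, hIT⟩ := hS' I hI
    obtain ⟨_, hzI', hIT'⟩ := hS' I' hI'
    have rec' : ∀ (J : Set V), z ∈ J → J ⊆ insert z T →
        J = insert z (Subtype.val '' (Subtype.val ⁻¹' J : Set T)) := by
      intro J hzJ hJT
      ext x
      simp only [Set.mem_insert_iff, Set.mem_image, Set.mem_preimage]
      constructor
      · intro hx
        rcases hJT hx with rfl | hxT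
        · exact Or.inl rfl
        · exact Or.inr ⟨⟨x, hxT⟩, hx, rfl⟩
      · rintro (rfl | ⟨y, hy, rfl⟩)
        · exact hzJ
        · exact hy
    rw [rec' I hzI hIT, rec' I' hzI' hIT']
    simp only at h
    rw [h]

lemma induce_isAcyclic' {V : Type*} {G : SimpleGraph V} (hG : G.IsAcyclic) (s : Set V) :
    (G.induce s).IsAcyclic := by
  intro v c hc
  exact hG (c.map (Embedding.induce (G := G) s).toHom)
    (hc.map (Embedding.induce (G := G) s).injective)

lemma numMIS_aux : ∀ (n : ℕ) {V : Type u} [Fintype V] (G : SimpleGraph V),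
    G.IsAcyclic → Fintype.card V = n → numMIS G ≤ 2 ^ (n / 2) := by
  intro n
  induction n using Nat.strong_induction_on with
  | _ n IH =>
  intro V _ G hG hcard
  classical
  by_cases hE : ∃ a b, G.Adj a b
  · obtain ⟨a, b, hab⟩ := hE
    obtain ⟨v, u, hadj, huniq⟩ := exists_leaf hG hab
    have hvu : v ≠ u := hadj.ne
    set A : Set V := {x | ¬ G.Adj u x ∧ x ≠ u} with hA
    set B : Set V := {x | x ≠ u ∧ x ≠ v} with hB
    set S : Set (Set V) := {I | IsMaxIndepSet G I} with hSdef
    set S1 : Set (Set V) := {I ∈ S | u ∈ I} with hS1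
    set S2 : Set (Set V) := {I ∈ S | u ∉ I} with hS2
    have hsplit : S = S1 ∪ S2 := by
      ext I; by_cases h : u ∈ I <;> simp [hS1, hS2, hSdef, h]
    have hc1 : S1.ncard ≤ numMIS (G.induce A) := by
      refine card_restrict G A u (fun x hx => hx.1) S1 ?_
      rintro I ⟨hI, huI⟩
      refine ⟨hI, huI, ?_⟩
      intro x hx
      rcases eq_or_ne x u with rfl | hxu
      · exact Set.mem_insert _ _
      · exact Set.mem_insert_of_mem _ ⟨fun had => hI.1 huI hx had, hxu⟩
    have hc2 : S2.ncard ≤ numMIS (G.induce B) := by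
      refine card_restrict G B v (fun x hx had => hx.1 (huniq x had)) S2 ?_
      rintro I ⟨hI, huI⟩
      have hvI : v ∈ I := by
        by_contra hvI
        have hins : _root_.IsIndepSet G (insert v I) := by
          intro c hc d hd hadjcd
          rcases Set.mem_insert_iff.1 hc with rfl | hcI
          · rcases Set.mem_insert_iff.1 hd with rfl | hdI
            · exact G.irrefl hadjcd
            · exact huI ((huniq d hadjcd) ▸ hdI)
          · rcases Set.mem_insert_iff.1 hd with rfl | hdI
            · exact huI ((huniq c hadjcd.symm) ▸ hcI)
            · exact hI.1 hcI hdI hadjcd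
        have := hI.2 _ hins (Set.subset_insert _ _)
        exact hvI (this ▸ Set.mem_insert _ _)
      refine ⟨hI, hvI, ?_⟩
      intro x hx
      rcases eq_or_ne x v with rfl | hxv
      · exact Set.mem_insert _ _
      · exact Set.mem_insert_of_mem _ ⟨fun h => huI (h ▸ hx), hxv⟩
    -- cardinalities
    have hBcompl : B = ({u, v} : Set V)ᶜ := by
      ext x; simp [hB, not_or]
    have hn2 : 2 ≤ n := by
      rw [← hcard]
      have : Nontrivial V := ⟨v, u, hvu⟩
      exact Fintype.one_lt_card
    have hBcard : B.ncard = n - 2 := by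
      have h := Set.ncard_add_ncard_compl ({u, v} : Set V)
      rw [Set.ncard_pair hvu.symm, ← hBcompl, Nat.card_eq_fintype_card, hcard] at h
      omega
    have hAB : A ⊆ B := by
      intro x hx
      exact ⟨hx.2, fun h => hx.1 (h ▸ hadj.symm)⟩
    have hAcard : A.ncard ≤ n - 2 := hBcard ▸ Set.ncard_le_ncard hAB (Set.toFinite _)
    have cardA : Fintype.card ↥A = A.ncard := by
      rw [← Nat.card_coe_set_eq, Nat.card_eq_fintype_card]
    have cardB : Fintype.card ↥B = B.ncard := by
      rw [← Nat.card_coe_set_eq, Nat.card_eq_fintype_card]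
    have ihA : numMIS (G.induce A) ≤ 2 ^ (A.ncard / 2) := by
      have := IH A.ncard (by omega) (G.induce A) (induce_isAcyclic' hG A) cardA
      exact this
    have ihB : numMIS (G.induce B) ≤ 2 ^ ((n - 2) / 2) := by
      have := IH B.ncard (by omega) (G.induce B) (induce_isAcyclic' hG B) cardB
      rwa [hBcard] at this
    have hpow : 2 ^ (A.ncard / 2) ≤ 2 ^ ((n - 2) / 2) :=
      Nat.pow_le_pow_right (by norm_num) (Nat.div_le_div_right hAcard)
    have : numMIS G ≤ S1.ncard + S2.ncard := by
      rw [numMIS, ← hSdef, hsplit]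
      exact Set.ncard_union_le _ _
    have hfinal : 2 ^ ((n - 2) / 2) + 2 ^ ((n - 2) / 2) = 2 ^ (n / 2) := by
      have : (n - 2) / 2 + 1 = n / 2 := by omega
      rw [← this, pow_succ]
      ring
    omega
  · push_neg at hE
    have huniv : {I : Set V | IsMaxIndepSet G I} = {Set.univ} := by
      ext I
      simp only [Set.mem_setOf_eq, Set.mem_singleton_iff]
      constructor
      · rintro ⟨hi, hmax⟩
        exact (hmax Set.univ (fun x _ y _ => hE x y) (Set.subset_univ I)).symm
      · rintro rfl
        exact ⟨fun x _ y _ => hE x y, fun J _ hsub => Set.eq_univ_of_univ_subset hsub⟩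
    rw [numMIS, huniv, Set.ncard_singleton]
    exact Nat.one_le_two_pow

theorem numMIS_forest_le {V : Type*} [Fintype V] (G : SimpleGraph V)
    (hG : G.IsAcyclic) (hn : 1 ≤ Fintype.card V) :
    numMIS G ≤ 2 ^ (Fintype.card V / 2) :=
  numMIS_aux _ G hG rfl
end

section
/- If G is a tree with n vertices, then m(G) ≤ 2^{(n−2)/2} + 1 when n is even, and m(G) ≤ 2^{(n−1)/2} when n is odd. -/
section basic
variable {V : Type*} {G : SimpleGraph V} {I : Set V}

lemma isMaxIndepSet_iff :
    IsMaxIndepSet G I ↔ IsIndepSet G I ∧ ∀ v, v ∉ I → ∃ u ∈ I, G.Adj u v := by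
  constructor
  · rintro ⟨hind, hmax⟩
    refine ⟨hind, fun v hv => ?_⟩
    by_contra h
    push_neg at h
    have hJ : IsIndepSet G (insert v I) := by
      rintro a ha b hb hab
      rcases ha with rfl | ha
      · rcases hb with rfl | hb
        · exact hab.ne rfl
        · exact h b hb hab.symm
      · rcases hb with rfl | hb
        · exact h a ha hab
        · exact hind ha hb hab
    have := hmax _ hJ (Set.subset_insert v I)
    exact hv (this ▸ Set.mem_insert v I)
  · rintro ⟨hind, hdom⟩
    refine ⟨hind, fun J hJ hIJ => ?_⟩
    ext v
    refine ⟨fun hv => ?_, fun hv => hIJ hv⟩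
    by_contra hvI
    obtain ⟨u, huI, hadj⟩ := hdom v hvI
    exact hJ (hIJ huI) hv hadj

lemma IsMaxIndepSet.mem_iff (hI : IsMaxIndepSet G I) {v : V} :
    v ∈ I ↔ ∀ u ∈ I, ¬ G.Adj u v := by
  constructor
  · intro hv u hu hadj
    exact hI.1 hu hv hadj
  · intro h
    by_contra hv
    obtain ⟨u, huI, hadj⟩ := (isMaxIndepSet_iff.mp hI).2 v hv
    exact h u huI hadj

end basic

section counting
variable {α : Type*} [Finite α]

lemma ncard_powerset (T : Set α) : {S : Set α | S ⊆ T}.ncard = 2 ^ T.ncard := by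
  classical
  letI : Fintype α := Fintype.ofFinite α
  letI : Fintype ↥T := Subtype.fintype _
  have e : {S : Set α // S ⊆ T} ≃ Set ↥T :=
    { toFun := fun S => {a : ↥T | ↑a ∈ S.1}
      invFun := fun U => ⟨Subtype.val '' U, by rintro a ⟨b, _, rfl⟩; exact b.2⟩
      left_inv := by
        rintro ⟨S, hS⟩
        ext v
        simp only [Set.mem_image, Set.mem_setOf_eq, Subtype.exists, exists_and_right,
          exists_eq_right]
        exact ⟨fun ⟨h, hv⟩ => hv, fun hv => ⟨hS hv, hv⟩⟩
      right_inv := by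
        intro U
        ext a
        simp only [Set.mem_setOf_eq, Set.mem_image, Subtype.exists]
        constructor
        · rintro ⟨b, hb, hU, hba⟩
          obtain rfl : (⟨b, hb⟩ : ↥T) = a := Subtype.ext hba
          exact hU
        · intro ha
          exact ⟨a.1, a.2, by simpa using ha⟩ }
  have h1 : {S : Set α | S ⊆ T}.ncard = Nat.card {S : Set α // S ⊆ T} :=
    (Nat.card_coe_set_eq {S : Set α | S ⊆ T}).symm
  rw [h1, Nat.card_congr e, Nat.card_eq_fintype_card, Fintype.card_set,
    ← Nat.card_coe_set_eq, Nat.card_eq_fintype_card]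

lemma ncard_le_pow_of_inj (F : Set (Set α)) (f : Set α → Set α) (T : Set α)
    (hinj : Set.InjOn f F) (hsub : ∀ I ∈ F, f I ⊆ T) : F.ncard ≤ 2 ^ T.ncard := by
  rw [← Set.ncard_image_of_injOn hinj]
  rw [← ncard_powerset T]
  exact Set.ncard_le_ncard (by rintro S ⟨I, hI, rfl⟩; exact hsub I hI) (Set.toFinite _)

end counting

section bipartite
variable {V : Type*} {G : SimpleGraph V} {C : V → Bool}

private lemma bool_aux {a b c : Bool} (h1 : a ≠ b) (h2 : c ≠ b) : a = c := by
  cases a <;> cases b <;> cases c <;> simp_all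

lemma inter_color_injOn (hC : ∀ ⦃u w⦄, G.Adj u w → C u ≠ C w) (c : Bool) :
    Set.InjOn (fun I => I ∩ {v | C v = c}) {I : Set V | IsMaxIndepSet G I} := by
  have key : ∀ I ∈ {I : Set V | IsMaxIndepSet G I}, ∀ J ∈ {I : Set V | IsMaxIndepSet G I},
      I ∩ {v | C v = c} = J ∩ {v | C v = c} → I ⊆ J := by
    intro I hI J hJ h v hv
    by_cases hcv : C v = c
    · have : v ∈ J ∩ {v | C v = c} := h ▸ ⟨hv, hcv⟩
      exact this.1
    · refine (IsMaxIndepSet.mem_iff hJ).2 fun u hu hadj => ?_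
      have hcu : C u = c := bool_aux (hC hadj) (Ne.symm hcv)
      have : u ∈ I ∩ {v | C v = c} := h.symm ▸ ⟨hu, hcu⟩
      exact hI.1 this.1 hv hadj
  intro I hI J hJ h
  exact Set.Subset.antisymm (key I hI J hJ h) (key J hJ I hI h.symm)

end bipartite

section tree
open SimpleGraph Walk
variable {V : Type*} {G : SimpleGraph V} {r u v w : V}

lemma isPath_concat {p : G.Walk u v} (hp : p.IsPath) (h : G.Adj v w)
    (hw : w ∉ p.support) : (p.concat h).IsPath := by
  rw [Walk.isPath_def, Walk.support_concat]
  simp only [List.concat_eq_append, List.nodup_append, List.nodup_cons, List.nodup_nil,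
    and_true, List.mem_singleton, List.disjoint_singleton]
  exact ⟨hp.support_nodup, by simpa using hw, by rintro a ha b rfl rfl; exact hw ha⟩

lemma dist_lt_of_mem_support (hconn : G.Connected) {p : G.Walk r u}
    (hlen : p.length = G.dist r u) (hv : v ∈ p.support) (hne : v ≠ u) :
    G.dist r v < G.dist r u := by
  classical
  have hspec := p.take_spec hv
  have hlen2 := congr_arg Walk.length hspec
  rw [Walk.length_append] at hlen2
  have h1 : G.dist r v ≤ (p.takeUntil v hv).length := SimpleGraph.dist_le _
  have h2 : (p.dropUntil v hv).length ≠ 0 := fun h0 => hne (Walk.eq_of_length_eq_zero h0)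
  omega

lemma not_mem_support_of_dist_lt (hconn : G.Connected) {p : G.Walk r u}
    (hlen : p.length = G.dist r u) (hd : G.dist r u < G.dist r v) : v ∉ p.support := by
  intro hv
  rcases eq_or_ne v u with rfl | hne
  · omega
  · exact absurd (dist_lt_of_mem_support hconn hlen hv hne) (by omega)

lemma adj_dist_le (hconn : G.Connected) (h : G.Adj u v) (r : V) :
    G.dist r v ≤ G.dist r u + 1 := by
  have := hconn.dist_triangle (u := r) (v := u) (w := v)
  rwa [SimpleGraph.dist_eq_one_iff_adj.mpr h] at this

lemma SimpleGraph.IsTree.adj_dist_ne (hG : G.IsTree) (h : G.Adj u v) (r : V) :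
    G.dist r u ≠ G.dist r v := by
  intro heq
  have hconn := hG.isConnected
  obtain ⟨p, hp, hplen⟩ := hconn.exists_path_of_dist r u
  obtain ⟨q, hq, hqlen⟩ := hconn.exists_path_of_dist r v
  have hvp : v ∉ p.support := by
    intro hv
    exact absurd (dist_lt_of_mem_support hconn hplen hv h.ne') (by omega)
  have hw1 : (p.concat h).IsPath := isPath_concat hp h hvp
  have := hG.IsAcyclic.path_unique ⟨q, hq⟩ ⟨p.concat h, hw1⟩
  have hlen : q.length = (p.concat h).length :=
    congr_arg Walk.length (Subtype.ext_iff.mp this)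
  rw [Walk.length_concat, hplen, hqlen] at hlen
  omega

lemma SimpleGraph.IsTree.closer_unique (hG : G.IsTree) {u u' : V} (h : G.Adj u w) (h' : G.Adj u' w)
    (hd : G.dist r u + 1 = G.dist r w) (hd' : G.dist r u' + 1 = G.dist r w) : u = u' := by
  have hconn := hG.isConnected
  obtain ⟨p, hp, hplen⟩ := hconn.exists_path_of_dist r u
  obtain ⟨p', hp', hplen'⟩ := hconn.exists_path_of_dist r u'
  have hwp : w ∉ p.support := not_mem_support_of_dist_lt hconn hplen (by omega)
  have hwp' : w ∉ p'.support := not_mem_support_of_dist_lt hconn hplen' (by omega)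
  have h1 : (p.concat h).IsPath := isPath_concat hp h hwp
  have h2 : (p'.concat h').IsPath := isPath_concat hp' h' hwp'
  have := hG.IsAcyclic.path_unique ⟨p.concat h, h1⟩ ⟨p'.concat h', h2⟩
  obtain ⟨hv, -⟩ := Walk.concat_inj (Subtype.ext_iff.mp this)
  exact hv

lemma exists_closer (hconn : G.Connected) (hne : w ≠ r) :
    ∃ u, G.Adj u w ∧ G.dist r u + 1 = G.dist r w := by
  obtain ⟨p, hp, hplen⟩ := hconn.exists_path_of_dist r w
  obtain ⟨u, ha, q, hcons⟩ := Walk.exists_eq_cons_of_ne hne p.reverse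
  refine ⟨u, ha.symm, ?_⟩
  have hq : G.dist r u ≤ q.reverse.length := SimpleGraph.dist_le _
  have hlq : q.reverse.length = q.length := Walk.length_reverse _
  have hlen2 : p.reverse.length = q.length + 1 := by rw [hcons]; simp
  rw [Walk.length_reverse] at hlen2
  have h3 : G.dist r w ≤ G.dist r u + 1 := adj_dist_le hconn ha.symm r
  have h4 : 0 < G.dist r w := hconn.pos_dist_of_ne (Ne.symm hne)
  omega

lemma SimpleGraph.IsTree.adj_dist_cases (hG : G.IsTree) (h : G.Adj u v) (r : V) :
    G.dist r v = G.dist r u + 1 ∨ G.dist r u = G.dist r v + 1 := by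
  have h1 := adj_dist_le hG.isConnected h r
  have h2 := adj_dist_le hG.isConnected h.symm r
  have h3 := hG.adj_dist_ne h r
  omega

end tree

section internal
variable {V : Type*} {G : SimpleGraph V} {a b c : V}

lemma exists_two_nbrs_of_internal {p : G.Walk a b} (hp : p.IsPath) (hc : c ∈ p.support)
    (hca : c ≠ a) (hcb : c ≠ b) :
    ∃ u1 u2, u1 ≠ u2 ∧ G.Adj c u1 ∧ G.Adj c u2 ∧ u1 ∈ p.support ∧ u2 ∈ p.support := by
  classical
  set q1 := p.takeUntil c hc with hq1
  set q2 := p.dropUntil c hc with hq2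
  obtain ⟨u1, h1, t1, hcons1⟩ := SimpleGraph.Walk.exists_eq_cons_of_ne hca q1.reverse
  obtain ⟨u2, h2, t2, hcons2⟩ := SimpleGraph.Walk.exists_eq_cons_of_ne hcb q2
  have hu1q1 : u1 ∈ q1.support := by
    have : u1 ∈ q1.reverse.support := by rw [hcons1]; simp [SimpleGraph.Walk.support_cons]
    rwa [SimpleGraph.Walk.support_reverse, List.mem_reverse] at this
  have hu2q2 : u2 ∈ q2.support.tail := by
    rw [hcons2]
    simp [SimpleGraph.Walk.support_cons]
  have hsupp : p.support = q1.support ++ q2.support.tail := by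
    conv_lhs => rw [← p.take_spec hc]
    rw [SimpleGraph.Walk.support_append]
  have hnd : (q1.support ++ q2.support.tail).Nodup := by
    rw [← hsupp]; exact hp.support_nodup
  have hdisj := List.disjoint_of_nodup_append hnd
  refine ⟨u1, u2, fun he => hdisj hu1q1 (he ▸ hu2q2), h1, h2, ?_, ?_⟩
  · exact SimpleGraph.Walk.support_takeUntil_subset p hc hu1q1
  · exact SimpleGraph.Walk.support_dropUntil_subset p hc (List.mem_of_mem_tail hu2q2)

end internal

section induced
open SimpleGraph
variable {V : Type*} {G : SimpleGraph V}

lemma isAcyclic_induce (hG : G.IsAcyclic) (s : Set V) : (G.induce s).IsAcyclic := by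
  intro v c hc
  exact hG (c.map (SimpleGraph.Embedding.induce s).toHom)
    ((Walk.map_isCycle_iff_of_injective Subtype.val_injective).mpr hc)

lemma mis_split [Finite V] {x y : V} (hxy : G.Adj x y) (hleaf : ∀ ⦃w⦄, G.Adj x w → w = y) :
    numMIS G = {I : Set V | IsMaxIndepSet G I ∧ x ∈ I}.ncard
      + {I : Set V | IsMaxIndepSet G I ∧ y ∈ I}.ncard := by
  have hdisj : Disjoint {I : Set V | IsMaxIndepSet G I ∧ x ∈ I}
      {I : Set V | IsMaxIndepSet G I ∧ y ∈ I} := by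
    rw [Set.disjoint_left]
    rintro I ⟨hI, hxI⟩ ⟨-, hyI⟩
    exact hI.1 hxI hyI hxy
  have hsplit : {I : Set V | IsMaxIndepSet G I} =
      {I : Set V | IsMaxIndepSet G I ∧ x ∈ I} ∪ {I : Set V | IsMaxIndepSet G I ∧ y ∈ I} := by
    ext I
    simp only [Set.mem_setOf_eq, Set.mem_union]
    constructor
    · intro hI
      by_cases hx : x ∈ I
      · exact Or.inl ⟨hI, hx⟩
      · obtain ⟨u, huI, hu⟩ := (isMaxIndepSet_iff.mp hI).2 x hx
        exact Or.inr ⟨hI, (hleaf hu.symm) ▸ huI⟩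
    · rintro (⟨hI, -⟩ | ⟨hI, -⟩) <;> exact hI
  rw [numMIS, hsplit, Set.ncard_union_eq hdisj (Set.toFinite _) (Set.toFinite _)]

lemma ncard_mis_restrict [Finite V] {x y : V} (hxy : G.Adj x y)
    (hleaf : ∀ ⦃w⦄, G.Adj x w → w = y) :
    {I : Set V | IsMaxIndepSet G I ∧ x ∈ I}.ncard
      ≤ numMIS (G.induce ({x, y}ᶜ : Set V)) := by
  classical
  set s : Set V := {x, y}ᶜ with hs
  have hmem : ∀ v : V, v ∈ s ↔ ¬(v = x ∨ v = y) := by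
    intro v; simp [hs]
  refine Set.ncard_le_ncard_of_injOn (fun I => {v : ↥s | ↑v ∈ I}) ?_ ?_ (Set.toFinite _)
  · rintro I ⟨hI, hxI⟩
    have hyI : y ∉ I := fun hyI => hI.1 hxI hyI hxy
    rw [Set.mem_setOf_eq, isMaxIndepSet_iff]
    constructor
    · rintro ⟨u, hu⟩ huI ⟨w, hw⟩ hwI hadj
      exact hI.1 huI hwI hadj
    · rintro ⟨v, hv⟩ hvI
      obtain ⟨u, huI, hadj⟩ := (isMaxIndepSet_iff.mp hI).2 v hvI
      have hux : u ≠ x := by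
        rintro rfl
        have := hleaf hadj
        rw [hmem] at hv
        exact hv (Or.inr this)
      have huy : u ≠ y := fun h => hyI (h ▸ huI)
      have hus : u ∈ s := by rw [hmem]; tauto
      exact ⟨⟨u, hus⟩, huI, hadj⟩
  · rintro I ⟨hI, hxI⟩ J ⟨hJ, hxJ⟩ h
    have hyI : y ∉ I := fun hyI => hI.1 hxI hyI hxy
    have hyJ : y ∉ J := fun hyJ => hJ.1 hxJ hyJ hxy
    ext v
    by_cases hvx : v = x
    · subst hvx; simp [hxI, hxJ]
    by_cases hvy : v = y
    · subst hvy; simp [hyI, hyJ]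
    have hv : v ∈ s := by rw [hmem]; tauto
    have := Set.ext_iff.mp h ⟨v, hv⟩
    simpa using this

lemma injOn_inter_diff [Finite V] {A K : Set V} {F : Set (Set V)} {C : V → Bool} {c : Bool}
    (hC : ∀ ⦃u w⦄, G.Adj u w → C u ≠ C w) (hA : A = {v | C v = c})
    (hF : ∀ I ∈ F, IsMaxIndepSet G I) (hK : ∀ I ∈ F, K ⊆ I ∩ A) :
    Set.InjOn (fun I => (I ∩ A) \ K) F := by
  intro I hI J hJ h
  simp only at h
  have h2 : I ∩ A = J ∩ A := by
    rw [← Set.diff_union_of_subset (hK I hI), ← Set.diff_union_of_subset (hK J hJ), h]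
  subst hA
  exact inter_color_injOn hC c (hF I hI) (hF J hJ) h2

end induced

section conn
open SimpleGraph
variable {V : Type*} {G : SimpleGraph V}

lemma induce_compl_pair_connected (hG : G.IsTree) {x y z : V}
    (hyx : G.Adj y x) (hleafx : ∀ ⦃w⦄, G.Adj x w → w = y)
    (hzy : G.Adj z y) (hnbry : ∀ ⦃w⦄, G.Adj y w → w = x ∨ w = z) (hzx : z ≠ x) :
    (G.induce ({x, y}ᶜ : Set V)).Connected := by
  classical
  set s : Set V := {x, y}ᶜ with hs
  have hmem : ∀ v : V, v ∈ s ↔ v ≠ x ∧ v ≠ y := by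
    intro v; simp [hs, not_or]
  have hzs : z ∈ s := (hmem z).mpr ⟨hzx, hzy.ne⟩
  apply SimpleGraph.induce_connected_of_patches z hzs
  intro v hv
  obtain ⟨p, hp, -⟩ := hG.isConnected.exists_path_of_dist z v
  have hvs := (hmem v).mp hv
  have hxsupp : x ∉ p.support := by
    intro hxp
    obtain ⟨u1, u2, hne, h1, h2, -, -⟩ :=
      exists_two_nbrs_of_internal hp hxp (Ne.symm hzx) (Ne.symm hvs.1)
    exact hne ((hleafx h1).trans (hleafx h2).symm)
  have hysupp : y ∉ p.support := by
    intro hyp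
    obtain ⟨u1, u2, hne, h1, h2, hm1, hm2⟩ :=
      exists_two_nbrs_of_internal hp hyp (Ne.symm hzy.ne) (Ne.symm hvs.2)
    rcases hnbry h1 with rfl | rfl
    · exact hxsupp hm1
    · rcases hnbry h2 with rfl | rfl
      · exact hxsupp hm2
      · exact hne rfl
  refine ⟨{w | w ∈ p.support}, ?_, p.start_mem_support, p.end_mem_support, ?_⟩
  · intro w hw
    rw [hmem]
    exact ⟨fun h => hxsupp (h ▸ hw), fun h => hysupp (h ▸ hw)⟩
  · exact (p.connected_induce_support).preconnected _ _

end conn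

private lemma pow_two_aux {k : ℕ} (h : 2 ≤ k) : 2 ^ (k - 2) + 2 ^ (k - 2) = 2 ^ (k - 1) := by
  have h1 : k - 1 = (k - 2) + 1 := by omega
  rw [h1, pow_succ]
  omega

section main
open SimpleGraph

universe u

theorem numMIS_tree_le_aux : ∀ (n : ℕ) {V : Type u} [Fintype V] (G : SimpleGraph V),
    Fintype.card V = n → G.IsTree →
    (Even n → numMIS G ≤ 2 ^ ((n - 2) / 2) + 1) ∧
    (Odd n → numMIS G ≤ 2 ^ ((n - 1) / 2)) := by
  intro n
  induction n using Nat.strong_induction_on with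
  | _ n IH =>
    intro V _ G hcard hG
    classical
    have hconn := hG.isConnected
    obtain ⟨r⟩ : Nonempty V := hconn.nonempty
    have hneV : Nonempty V := ⟨r⟩
    have hn1 : 1 ≤ n := by
      rw [← hcard]
      exact Fintype.card_pos
    set C : V → Bool := fun v => decide (G.dist r v % 2 = 1) with hCdef
    have hC : ∀ ⦃u w⦄, G.Adj u w → C u ≠ C w := by
      intro u w h
      have := hG.adj_dist_cases h r
      simp only [hCdef, ne_eq, decide_eq_decide]
      omega
    have hboundc : ∀ c : Bool, numMIS G ≤ 2 ^ ({v | C v = c} : Set V).ncard :=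
      fun c => ncard_le_pow_of_inj _ _ _
        (inter_color_injOn hC c) (fun I _ => Set.inter_subset_right)
    have hcompl : ({v | C v = true} : Set V)ᶜ = {v | C v = false} := by
      ext v; simp
    have hsum : ({v | C v = true} : Set V).ncard + ({v | C v = false} : Set V).ncard = n := by
      rw [← hcompl, Set.ncard_add_ncard_compl, Nat.card_eq_fintype_card, hcard]
    constructor
    · -- Even case
      intro hEv
      obtain ⟨m, hm⟩ := hEv
      by_cases hbal : ({v | C v = true} : Set V).ncard = ({v | C v = false} : Set V).ncard
      · -- balanced
        by_cases hn2 : n ≤ 2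
        · have hn2' : n = 2 := by omega
          have ha1 : ({v | C v = true} : Set V).ncard = 1 := by omega
          have h2 := hboundc true
          rw [ha1] at h2
          subst hn2'
          norm_num at h2 ⊢
          exact h2
        · -- n ≥ 4, structural argument
          have hn4 : 4 ≤ n := by omega
          obtain ⟨x, hx⟩ := Finite.exists_max (fun v => G.dist r v)
          have hd1 : 1 ≤ G.dist r x := by
            by_contra hd0
            have hall : ∀ v : V, v = r := by
              intro v
              have h0 : G.dist r v = 0 := by have := hx v; omega
              exact ((hconn r v).dist_eq_zero_iff.mp h0).symm
            have : (Finset.univ : Finset V).card ≤ ({r} : Finset V).card :=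
              Finset.card_le_card (fun v _ => by simp [hall v])
            simp [← hcard] at this
            omega
          have hxr : x ≠ r := by
            intro h
            rw [h, SimpleGraph.dist_self] at hd1
            omega
          obtain ⟨y, hyx, hyd⟩ := exists_closer hconn hxr
          have hleafx : ∀ ⦃w⦄, G.Adj x w → w = y := by
            intro w hw
            rcases hG.adj_dist_cases hw r with h1 | h1
            · exact absurd (hx w) (by omega)
            · exact hG.closer_unique hw.symm hyx (by omega) hyd
          set A : Set V := {v | C v = C x} with hA
          have hxA : x ∈ A := by simp [hA]
          have hyA : C y ≠ C x := hC hyx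
          have hAcard : 2 * A.ncard = n := by
            cases hcx : C x
            · have : A = {v | C v = false} := by rw [hA, hcx]
              rw [this]
              omega
            · have : A = {v | C v = true} := by rw [hA, hcx]
              rw [this]
              omega
          have hAbound : ∀ (T : Set V) (F : Set (Set V)) (K : Set V),
              (∀ I ∈ F, IsMaxIndepSet G I) → (∀ I ∈ F, K ⊆ I ∩ A) →
              (∀ I ∈ F, (I ∩ A) \ K ⊆ T) → F.ncard ≤ 2 ^ T.ncard := by
            intro T F K h1 h2 h3
            exact ncard_le_pow_of_inj F (fun I => (I ∩ A) \ K) T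
              (injOn_inter_diff hC hA h1 h2) h3
          by_cases hP : ∃ x', G.Adj y x' ∧ x' ≠ x ∧ G.dist r x' = G.dist r x
          · -- Case (i): second leaf x' attached to y
            obtain ⟨x', hyx', hx'x, hx'd⟩ := hP
            have hleafx' : ∀ ⦃w⦄, G.Adj x' w → w = y := by
              intro w hw
              rcases hG.adj_dist_cases hw r with h1 | h1
              · exact absurd (hx w) (by omega)
              · exact hG.closer_unique (r := r) hw.symm hyx' (by omega) (by omega)
            have hx'A : x' ∈ A := by
              have : C x' ≠ C y := Ne.symm (hC hyx')
              exact bool_aux this (Ne.symm hyA)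
            have hsplit := mis_split hyx'.symm hleafx'
            set T : Set V := A \ {x, x'} with hT
            have hTcard : T.ncard = A.ncard - 2 := by
              rw [hT, Set.ncard_diff (by
                intro w hw
                rcases hw with rfl | rfl
                · exact hxA
                · exact hx'A) (Set.toFinite _)]
              rw [Set.ncard_pair (Ne.symm hx'x)]
            have hb1 : {I : Set V | IsMaxIndepSet G I ∧ x' ∈ I}.ncard ≤ 2 ^ T.ncard := by
              apply hAbound T _ {x, x'} (fun I hI => hI.1)
              · rintro I ⟨hI, hx'I⟩
                have hyI : y ∉ I := fun hyI => hI.1 hx'I hyI hyx'.symm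
                have hxI : x ∈ I := by
                  by_contra hxI
                  obtain ⟨u, huI, hu⟩ := (isMaxIndepSet_iff.mp hI).2 x hxI
                  exact hyI ((hleafx hu.symm) ▸ huI)
                intro w hw
                rcases hw with rfl | rfl
                · exact ⟨hxI, hxA⟩
                · exact ⟨hx'I, hx'A⟩
              · rintro I ⟨hI, hx'I⟩
                exact Set.diff_subset_diff_left Set.inter_subset_right
            have hb2 : {I : Set V | IsMaxIndepSet G I ∧ y ∈ I}.ncard ≤ 2 ^ T.ncard := by
              apply hAbound T _ ∅ (fun I hI => hI.1) (fun I _ => Set.empty_subset _)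
              rintro I ⟨hI, hyI⟩ v ⟨⟨hvI, hvA⟩, -⟩
              refine ⟨hvA, ?_⟩
              rintro (rfl | rfl)
              · exact hI.1 hvI hyI hyx.symm
              · exact hI.1 hvI hyI hyx'.symm
            rw [hsplit]
            have hk2 : 2 ≤ A.ncard := by omega
            have key : 2 ^ T.ncard + 2 ^ T.ncard ≤ 2 ^ ((n - 2) / 2) + 1 := by
              rw [hTcard, pow_two_aux hk2]
              have : A.ncard - 1 = (n - 2) / 2 := by omega
              rw [this]
              omega
            omega
          · -- Case (ii)
            by_cases hzE : ∃ z, G.Adj z y ∧ G.dist r z + 1 = G.dist r y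
            · obtain ⟨z, hzy, hzd⟩ := hzE
              have hzx : z ≠ x := by
                intro h
                rw [h] at hzd
                omega
              have hnbry : ∀ ⦃w⦄, G.Adj y w → w = x ∨ w = z := by
                intro w hw
                rcases hG.adj_dist_cases hw r with h1 | h1
                · by_cases hwx : w = x
                  · exact Or.inl hwx
                  · exact absurd ⟨w, hw, hwx, by omega⟩ hP
                · exact Or.inr (hG.closer_unique hw.symm hzy (by omega) hzd)
              have hzA : z ∈ A := by
                have h1 : C z ≠ C y := hC hzy
                exact bool_aux h1 (Ne.symm hyA)
              have hsplit := mis_split hyx.symm hleafx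
              set T : Set V := A \ {x, z} with hT
              have hTcard : T.ncard = A.ncard - 2 := by
                rw [hT, Set.ncard_diff (by
                  intro w hw
                  rcases hw with rfl | rfl
                  · exact hxA
                  · exact hzA) (Set.toFinite _)]
                rw [Set.ncard_pair (Ne.symm hzx)]
              have hb2 : {I : Set V | IsMaxIndepSet G I ∧ y ∈ I}.ncard ≤ 2 ^ T.ncard := by
                apply hAbound T _ ∅ (fun I hI => hI.1) (fun I _ => Set.empty_subset _)
                rintro I ⟨hI, hyI⟩ v ⟨⟨hvI, hvA⟩, -⟩
                refine ⟨hvA, ?_⟩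
                rintro (rfl | rfl)
                · exact hI.1 hvI hyI hyx.symm
                · exact hI.1 hvI hyI hzy
              -- induced subgraph on the complement of {x, y}
              set s : Set V := ({x, y} : Set V)ᶜ with hs
              have htree' : (G.induce s).IsTree :=
                ⟨induce_compl_pair_connected hG hyx hleafx hzy hnbry hzx,
                  isAcyclic_induce hG.IsAcyclic s⟩
              have hxy : x ≠ y := hyx.ne'
              have hscard : Fintype.card ↥s = n - 2 := by
                have h2 : ({x, y} : Set V).ncard + s.ncard = n := by
                  rw [hs, Set.ncard_add_ncard_compl, Nat.card_eq_fintype_card, hcard]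
                have h3 : ({x, y} : Set V).ncard = 2 := Set.ncard_pair hxy
                rw [← Nat.card_eq_fintype_card, Nat.card_coe_set_eq]
                omega
              have hIH := (IH (n - 2) (by omega) (G.induce s) hscard htree').1 ⟨m - 1, by omega⟩
              have hb1 : {I : Set V | IsMaxIndepSet G I ∧ x ∈ I}.ncard
                  ≤ 2 ^ ((n - 2 - 2) / 2) + 1 :=
                le_trans (ncard_mis_restrict hyx.symm hleafx) hIH
              rw [hsplit]
              have key : 2 ^ T.ncard ≤ 2 ^ ((n - 2 - 2) / 2) := by
                rw [hTcard]
                have : A.ncard - 2 = (n - 2 - 2) / 2 := by omega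
                rw [this]
              have key2 : 2 ^ ((n - 2 - 2) / 2) + 2 ^ ((n - 2 - 2) / 2) = 2 ^ ((n - 2) / 2) := by
                have h4 : (n - 2) / 2 = (n - 2 - 2) / 2 + 1 := by omega
                rw [h4, pow_succ]
                omega
              omega
            · -- no closer neighbor of y: y = r and the tree has ≤ 2 vertices
              exfalso
              have hyr : y = r := by
                by_contra h
                exact hzE (exists_closer hconn h)
              have hd : G.dist r x = 1 := by
                rw [hyr, SimpleGraph.dist_self] at hyd
                omega
              have hall : ∀ v : V, v = r ∨ v = x := by
                intro v
                by_cases hvr : v = r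
                · exact Or.inl hvr
                · have hdv : G.dist r v = 1 := by
                    have h1 := hx v
                    have h2 := hconn.pos_dist_of_ne (Ne.symm hvr)
                    omega
                  have hadj : G.Adj r v := SimpleGraph.dist_eq_one_iff_adj.mp hdv
                  have : G.Adj y v := hyr ▸ hadj
                  by_cases hvx : v = x
                  · exact Or.inr hvx
                  · exact absurd ⟨v, this, hvx, by omega⟩ hP
              have : (Finset.univ : Finset V).card ≤ ({r, x} : Finset V).card :=
                Finset.card_le_card (fun v _ => by
                  rcases hall v with rfl | rfl <;> simp)
              have h5 : ({r, x} : Finset V).card ≤ 2 :=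
                le_trans (Finset.card_insert_le _ _) (by simp)
              have h6 : (Finset.univ : Finset V).card = n := by rw [← hcard]; rfl
              omega
      · -- unbalanced even case
        have hmin : numMIS G ≤ 2 ^ ((n - 2) / 2) := by
          rcases lt_or_gt_of_ne hbal with h | h
          · exact le_trans (hboundc true) (Nat.pow_le_pow_right (by norm_num) (by omega))
          · exact le_trans (hboundc false) (Nat.pow_le_pow_right (by norm_num) (by omega))
        omega
    · -- Odd case
      intro hO
      obtain ⟨m, hm⟩ := hO
      rcases le_total (({v | C v = true} : Set V).ncard) (({v | C v = false} : Set V).ncard)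
        with h | h
      · exact le_trans (hboundc true) (Nat.pow_le_pow_right (by norm_num) (by omega))
      · exact le_trans (hboundc false) (Nat.pow_le_pow_right (by norm_num) (by omega))

end main

theorem numMIS_tree_le {V : Type*} [Fintype V] (G : SimpleGraph V)
    (hG : G.IsTree) :
    (Even (Fintype.card V) → numMIS G ≤ 2 ^ ((Fintype.card V - 2) / 2) + 1) ∧
    (Odd (Fintype.card V) → numMIS G ≤ 2 ^ ((Fintype.card V - 1) / 2)) :=
  numMIS_tree_le_aux (Fintype.card V) G rfl hG
end

section
/- Define g(n,r) = 3^r · 2^{(n−3r)/2} if n ≡ r (mod 2) and g(n,r) = 3^{r−1} · 2^{(n−3r+3)/2} if n ≢ r (mod 2), and set g(n,0) = 2^⌊n/2⌋. Then for integers r > q ≥ 0 and n ≥ 3r − 1, g(n,r) ≥ g(n,q), with equality if and only if n and r have different parity and q = r − 1. -/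
/-- The function `g(n,r)`: `3^r·2^{(n−3r)/2}` if `n ≡ r (mod 2)`,
`3^{r−1}·2^{(n−3r+3)/2}` if `n ≢ r (mod 2)`, with `g(n,0) = 2^⌊n/2⌋`. -/
def g (n r : ℕ) : ℕ :=
  if r = 0 then 2 ^ (n / 2)
  else if n % 2 = r % 2 then 3 ^ r * 2 ^ ((n - 3 * r) / 2)
  else 3 ^ (r - 1) * 2 ^ ((n - 3 * r + 3) / 2)

lemma gstep (n r : ℕ) (hr : 1 ≤ r) (hn : 3*r - 1 ≤ n) :
    (n % 2 = r % 2 → g n (r-1) < g n r) ∧ (n % 2 ≠ r % 2 → g n (r-1) = g n r) := by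
  have hr0 : r ≠ 0 := by omega
  constructor
  · intro hp
    have hn3 : 3*r ≤ n := by omega
    set a := (n - 3*r)/2 with ha
    have hgr : g n r = 3^r * 2^a := by simp [g, hr0, hp]; rfl
    have hpos : 0 < (2:ℕ)^a := pow_pos (by norm_num) _
    rcases Nat.lt_or_ge r 2 with h1 | h2
    · have hr1 : r = 1 := by omega
      subst hr1
      have hg0 : g n 0 = 2^(n/2) := by simp [g]
      have hd : n/2 = a + 1 := by omega
      rw [hgr, hg0, hd, pow_succ, pow_one]
      omega
    · have hq0 : r - 1 ≠ 0 := by omega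
      have hqp : ¬ (n % 2 = (r-1) % 2) := by omega
      have hgq : g n (r-1) = 3^(r-2) * 2^(a+3) := by
        simp only [g, if_neg hq0, if_neg hqp]
        congr 2 <;> omega
      have e0 : r - 2 + 2 = r := by omega
      have e1 : (3:ℕ)^r = 9 * 3^(r-2) := by
        conv_lhs => rw [← e0]
        rw [pow_add]; ring
      have e2 : (2:ℕ)^(a+3) = 8 * 2^a := by ring
      rw [hgr, hgq, e1, e2]
      have hpos2 : 0 < (3:ℕ)^(r-2) := pow_pos (by norm_num) _
      nlinarith
  · intro hp
    have hgr : g n r = 3^(r-1) * 2^((n - 3*r + 3)/2) := by simp [g, hr0, hp]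
    rcases Nat.lt_or_ge r 2 with h1 | h2
    · have hr1 : r = 1 := by omega
      subst hr1
      have hg0 : g n 0 = 2^(n/2) := by simp [g]
      rw [hgr, hg0]
      have : (n - 3*1 + 3)/2 = n/2 := by omega
      rw [this]; ring
    · have hq0 : r - 1 ≠ 0 := by omega
      have hqp : n % 2 = (r-1) % 2 := by omega
      have hgq : g n (r-1) = 3^(r-1) * 2^((n - 3*(r-1))/2) := by
        simp [g, hq0, hqp]
      rw [hgr, hgq]
      congr 2
      omega

lemma gmono (n : ℕ) : ∀ r, 3*r - 1 ≤ n → ∀ q ≤ r, g n q ≤ g n r := by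
  intro r
  induction r with
  | zero => intro _ q hq; interval_cases q; exact le_refl _
  | succ r ih =>
    intro hn q hq
    rcases Nat.lt_or_ge q (r+1) with h | h
    · have h1 : g n q ≤ g n r := ih (by omega) q (by omega)
      have hstep := gstep n (r+1) (by omega) hn
      have h2 : g n r ≤ g n (r+1) := by
        by_cases hp : n % 2 = (r+1) % 2
        · have := hstep.1 hp; simpa using this.le
        · have := hstep.2 hp; simpa using this.le
      exact le_trans h1 h2
    · have : q = r+1 := by omega
      subst this; exact le_refl _

theorem g_mono_in_r (n r q : ℕ) (hq : q < r) (hn : 3 * r - 1 ≤ n) :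
    g n q ≤ g n r ∧ (g n r = g n q ↔ n % 2 ≠ r % 2 ∧ q = r - 1) := by
  have hmono : g n q ≤ g n r := gmono n r hn q hq.le
  refine ⟨hmono, ?_, ?_⟩
  · intro heq
    by_cases hp : n % 2 = r % 2
    · exfalso
      have hlt : g n (r-1) < g n r := (gstep n r (by omega) hn).1 hp
      have : g n q ≤ g n (r-1) := gmono n (r-1) (by omega) q (by omega)
      omega
    · refine ⟨hp, ?_⟩
      by_contra hne
      have hq2 : q ≤ r - 2 := by omega
      have hr2 : 2 ≤ r := by omega
      have hlt : g n ((r-1)-1) < g n (r-1) :=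
        (gstep n (r-1) (by omega) (by omega)).1 (by omega)
      have h1 : g n q ≤ g n (r-1-1) := gmono n (r-1-1) (by omega) q (by omega)
      have h2 : g n (r-1) ≤ g n r := by
        have := (gstep n r (by omega) hn).2 hp; omega
      omega
  · rintro ⟨hp, rfl⟩
    exact ((gstep n r (by omega) hn).2 hp).symm
end

section
/- Define c(n,r) = 3^{r−1} · 2^{(n−3r+2)/2} + 2^{r−1} if n ≡ r (mod 2) and c(n,r) = 3^r · 2^{(n−3r−1)/2} if n ≢ r (mod 2); set c(n,0) = 2^{(n−2)/2} + 1 if n is even and 2^{(n−1)/2} if n is odd. Then for integers r > q ≥ 0 and n ≥ 3r, c(n,r) ≥ c(n,q), with equality if and only if (n,r,q) = (4,1,0) or (7,2,1). -/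
/-- The function `c(n,r)`: `3^{r−1}·2^{(n−3r+2)/2} + 2^{r−1}` if `n ≡ r (mod 2)`,
`3^r·2^{(n−3r−1)/2}` if `n ≢ r (mod 2)`, with `c(n,0) = 2^{(n−2)/2}+1` for even `n`
and `2^{(n−1)/2}` for odd `n`. -/
def c (n r : ℕ) : ℕ :=
  if r = 0 then (if Even n then 2 ^ ((n - 2) / 2) + 1 else 2 ^ ((n - 1) / 2))
  else if n % 2 = r % 2 then 3 ^ (r - 1) * 2 ^ ((n - 3 * r + 2) / 2) + 2 ^ (r - 1)
  else 3 ^ r * 2 ^ ((n - 3 * r - 1) / 2)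


lemma two_pow_le' (a k : ℕ) : 2 ^ a ≤ 3 ^ a * 2 ^ k :=
  le_trans (Nat.pow_le_pow_left (by norm_num) a)
    (Nat.le_mul_of_pos_right _ (pow_pos (by norm_num) k))

lemma two_pow_eq' (a k : ℕ) : 3 ^ a * 2 ^ k = 2 ^ a ↔ a = 0 ∧ k = 0 := by
  constructor
  · intro h
    have ha : a = 0 := by
      by_contra ha
      have h1 : 2 ^ a < 3 ^ a := Nat.pow_lt_pow_left (by norm_num) ha
      have h2 : 3 ^ a ≤ 3 ^ a * 2 ^ k := Nat.le_mul_of_pos_right _ (pow_pos (by norm_num) k)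
      omega
    subst ha
    simp only [pow_zero, one_mul] at h
    refine ⟨rfl, ?_⟩
    by_contra hk
    have : 2 ^ 1 ≤ 2 ^ k := Nat.pow_le_pow_right (by norm_num) (by omega)
    omega
  · rintro ⟨rfl, rfl⟩; rfl

lemma step' (n r : ℕ) (hr : 1 ≤ r) (hn : 3 * r ≤ n) :
    c n (r - 1) ≤ c n r ∧ (c n r = c n (r - 1) ↔ (n = 4 ∧ r = 1) ∨ (n = 7 ∧ r = 2)) := by
  rcases eq_or_lt_of_le hr with h1 | h2
  · -- r = 1
    subst_vars
    rcases Nat.even_or_odd n with he | ho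
    · -- n even, n ≥ 4
      have hn4 : 4 ≤ n := by have := Nat.even_iff.mp he; omega
      have hpar : ¬ (n % 2 = 1 % 2) := by have := Nat.even_iff.mp he; omega
      set m := (n - 4) / 2 with hm
      have hc0 : c n (1 - 1) = 2 ^ (m + 1) + 1 := by
        have e2 : (n - 2) / 2 = m + 1 := by rcases he with ⟨t, ht⟩; omega
        simp only [c, if_pos rfl, if_pos he, e2, if_true]
      have hc1 : c n 1 = 2 ^ (m + 1) + 2 ^ m := by
        have e1 : (n - 3 * 1 - 1) / 2 = m := by omega
        simp only [c, if_neg (one_ne_zero), if_neg hpar, e1]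
        ring
      rw [hc0, hc1]
      have hm1 : 1 ≤ 2 ^ m := Nat.one_le_two_pow
      refine ⟨by omega, ?_⟩
      constructor
      · intro h
        have hm2 : 2 ^ m = 1 := by omega
        have hm0 : m = 0 := by
          by_contra hm0
          have : 2 ^ 1 ≤ 2 ^ m := Nat.pow_le_pow_right (by norm_num) (by omega)
          omega
        left
        refine ⟨?_, rfl⟩
        rcases he with ⟨t, ht⟩
        omega
      · rintro (⟨rfl, -⟩ | ⟨-, h⟩)
        · have : m = 0 := by omega
          rw [this]; norm_num
        · exact absurd h (by norm_num)
    · -- n odd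
      have hpar : n % 2 = 1 % 2 := by rcases ho with ⟨t, ht⟩; omega
      have hE : ¬ Even n := by simpa using Nat.not_even_iff_odd.mpr ho
      have hc0 : c n (1 - 1) = 2 ^ ((n - 1) / 2) := by
        simp only [c, if_pos rfl, if_neg hE, if_true]
      have hc1 : c n 1 = 2 ^ ((n - 1) / 2) + 1 := by
        have e1 : (n - 3 * 1 + 2) / 2 = (n - 1) / 2 := by omega
        simp only [c, if_neg (one_ne_zero), if_pos hpar, e1]
        norm_num
      rw [hc0, hc1]
      refine ⟨by omega, ?_⟩
      constructor
      · intro h; omega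
      · rintro (⟨rfl, -⟩ | ⟨-, h⟩)
        · exact absurd hpar (by norm_num)
        · exact absurd h (by norm_num)
  · -- r ≥ 2
    obtain ⟨s, rfl⟩ : ∃ s, r = s + 2 := ⟨r - 2, by omega⟩
    have hr1 : ¬ (s + 2 = 0) := by omega
    have hr1' : ¬ (s + 2 - 1 = 0) := by omega
    rcases Nat.decEq (n % 2) ((s + 2) % 2) with hpar | hpar
    · -- n ≢ r (mod 2): n ≥ 3r+1
      have hpar' : n % 2 = (s + 2 - 1) % 2 := by omega
      have hn1 : 3 * (s + 2) + 1 ≤ n := by omega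
      set k := (n - 3 * (s + 2) - 1) / 2 with hk
      have hcr : c n (s + 2) = 3 ^ s * 2 ^ (k + 3) + 3 ^ s * 2 ^ k := by
        simp only [c, if_neg hr1, if_neg hpar]
        rw [← hk]; ring
      have hcr1 : c n (s + 2 - 1) = 3 ^ s * 2 ^ (k + 3) + 2 ^ s := by
        have e1 : (n - 3 * (s + 2 - 1) + 2) / 2 = k + 3 := by omega
        have e2 : s + 2 - 1 - 1 = s := by omega
        simp only [c, if_neg hr1', if_pos hpar', e1, e2]
      rw [hcr, hcr1]
      have key1 : 2 ^ s ≤ 3 ^ s * 2 ^ k := two_pow_le' s k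
      refine ⟨by omega, ?_⟩
      constructor
      · intro h
        have heq : 3 ^ s * 2 ^ k = 2 ^ s := by omega
        obtain ⟨hs0, hk0⟩ := (two_pow_eq' s k).mp heq
        right
        constructor
        · omega
        · omega
      · rintro (⟨-, h⟩ | ⟨rfl, hs⟩)
        · exact absurd h (by omega)
        · have hs0 : s = 0 := by omega
          have hk0 : k = 0 := by omega
          rw [hs0, hk0]; norm_num
    · -- n ≡ r (mod 2)
      have hpar' : ¬ (n % 2 = (s + 2 - 1) % 2) := by omega
      have hcr : c n (s + 2) = 3 ^ (s + 1) * 2 ^ ((n - 3 * (s + 2) + 2) / 2) + 2 ^ (s + 1) := by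
        simp only [c, if_neg hr1, if_pos hpar, show s + 2 - 1 = s + 1 from rfl]
      have hcr1 : c n (s + 2 - 1) = 3 ^ (s + 1) * 2 ^ ((n - 3 * (s + 2) + 2) / 2) := by
        have hpar'' : ¬ (n % 2 = (s + 1) % 2) := by omega
        have e1 : (n - 3 * (s + 1) - 1) / 2 = (n - 3 * (s + 2) + 2) / 2 := by omega
        simp only [show s + 2 - 1 = s + 1 from rfl, c, if_neg (Nat.succ_ne_zero s),
          if_neg hpar'', e1]
      rw [hcr, hcr1]
      have hp : 1 ≤ 2 ^ (s + 1) := Nat.one_le_two_pow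
      refine ⟨by omega, ?_⟩
      constructor
      · intro h; exfalso; omega
      · rintro (⟨-, h⟩ | ⟨rfl, hs⟩)
        · exact absurd h (by omega)
        · exfalso
          have hs0 : s = 0 := by omega
          subst hs0
          omega

theorem c_mono_in_r (n r q : ℕ) (hq : q < r) (hn : 3 * r ≤ n) :
    c n q ≤ c n r ∧
      (c n r = c n q ↔ (n = 4 ∧ r = 1 ∧ q = 0) ∨ (n = 7 ∧ r = 2 ∧ q = 1)) := by
  induction r with
  | zero => omega
  | succ r ih =>
    have hstep := step' n (r + 1) (by omega) hn
    rw [show r + 1 - 1 = r from rfl] at hstep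
    rcases Nat.lt_or_ge q r with hlt | hge
    · -- q < r
      have hih := ih hlt (by omega)
      have ha := hih.1
      have hb := hstep.1
      refine ⟨le_trans ha hb, ?_⟩
      constructor
      · intro h
        exfalso
        have h1 : c n (r + 1) = c n r := by omega
        have h2 : c n r = c n q := by omega
        rcases hstep.2.mp h1 with ⟨-, h4⟩ | ⟨hn7, h7⟩
        · omega
        · have hr1 : r = 1 := by omega
          subst hr1
          have hq0 : q = 0 := by omega
          subst hq0
          rcases hih.2.mp h2 with ⟨hn4, -, -⟩ | ⟨-, hh, -⟩
          · omega
          · omega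
      · rintro (⟨-, h, hq1⟩ | ⟨-, h, hq1⟩) <;> exfalso <;> omega
    · have hqr : q = r := by omega
      subst hqr
      refine ⟨hstep.1, ?_⟩
      rw [hstep.2]
      constructor
      · rintro (⟨rfl, h⟩ | ⟨rfl, h⟩)
        · left; omega
        · right; omega
      · rintro (⟨rfl, -, rfl⟩ | ⟨rfl, h, rfl⟩)
        · left; omega
        · right; omega
end
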